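/- Let m ≥ 0 and let u = (u₁,u₂) : [−1,1] → ℂ² be continuously differentiable and satisfy the infinite mass boundary conditions. Then ∫_{−1}^{1} (|−u₂′(t) + m·u₁(t)|² + |u₁′(t) − m·u₂(t)|²) dt = ∫_{−1}^{1} (|u₁′(t)|² + |u₂′(t)|²) dt + m²·∫_{−1}^{1} (|u₁(t)|² + |u₂(t)|²) dt + m·(|u₁(1)|² + |u₂(1)|² + |u₁(−1)|² + |u₂(−1)|²). -/

import Mathlib

open MeasureTheory Set

/-- For `m ≥ 0` and `u = (u₁, u₂) : [-1,1] → ℂ²` continuously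
differentiable satisfying the infinite mass boundary conditions
`u₂(1) = -u₁(1)`, `u₂(-1) = u₁(-1)`, the `L²`-norm of `T(m)u` is
`‖u'‖² + m²‖u‖² + m(|u(1)|² + |u(-1)|²)`. -/
theorem transverse_form_identity
    (m : ℝ) (hm : 0 ≤ m) (u₁ u₂ u₁' u₂' : ℝ → ℂ)
    (hu₁ : ∀ t ∈ Icc (-1 : ℝ) 1, HasDerivWithinAt u₁ (u₁' t) (Icc (-1 : ℝ) 1) t)
    (hu₂ : ∀ t ∈ Icc (-1 : ℝ) 1, HasDerivWithinAt u₂ (u₂' t) (Icc (-1 : ℝ) 1) t)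
    (hc₁ : ContinuousOn u₁' (Icc (-1 : ℝ) 1))
    (hc₂ : ContinuousOn u₂' (Icc (-1 : ℝ) 1))
    (hbc1 : u₂ 1 = -u₁ 1) (hbc2 : u₂ (-1) = u₁ (-1)) :
    (∫ t in (-1 : ℝ)..1, (‖-u₂' t + (m : ℂ) * u₁ t‖ ^ 2 + ‖u₁' t - (m : ℂ) * u₂ t‖ ^ 2))
      = (∫ t in (-1 : ℝ)..1, (‖u₁' t‖ ^ 2 + ‖u₂' t‖ ^ 2))
        + m ^ 2 * (∫ t in (-1 : ℝ)..1, (‖u₁ t‖ ^ 2 + ‖u₂ t‖ ^ 2))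
        + m * (‖u₁ 1‖ ^ 2 + ‖u₂ 1‖ ^ 2 + ‖u₁ (-1)‖ ^ 2 + ‖u₂ (-1)‖ ^ 2) := by
  have h1 : (-1 : ℝ) ≤ 1 := by norm_num
  have hIcc : uIcc (-1 : ℝ) 1 = Icc (-1 : ℝ) 1 := uIcc_of_le h1
  have hcu₁ : ContinuousOn u₁ (Icc (-1 : ℝ) 1) := fun t ht =>
    (hu₁ t ht).continuousWithinAt
  have hcu₂ : ContinuousOn u₂ (Icc (-1 : ℝ) 1) := fun t ht =>
    (hu₂ t ht).continuousWithinAt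
  set g : ℝ → ℝ := fun t => (u₁ t * (starRingEnd ℂ) (u₂ t)).re with hg
  set g' : ℝ → ℝ := fun t =>
    (u₁' t * (starRingEnd ℂ) (u₂ t) + u₁ t * (starRingEnd ℂ) (u₂' t)).re with hg'
  -- continuity facts
  have hcg' : ContinuousOn g' (Icc (-1 : ℝ) 1) :=
    Complex.continuous_re.comp_continuousOn
      ((hc₁.mul hcu₂.star).add (hcu₁.mul hc₂.star))
  have hcg : ContinuousOn g (Icc (-1 : ℝ) 1) :=
    Complex.continuous_re.comp_continuousOn (hcu₁.mul hcu₂.star)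
  -- derivative of g
  have hgderiv : ∀ t ∈ Ioo (-1 : ℝ) 1, HasDerivAt g (g' t) t := by
    intro t ht
    have hmem : Icc (-1 : ℝ) 1 ∈ nhds t := Icc_mem_nhds ht.1 ht.2
    have h₁ : HasDerivAt u₁ (u₁' t) t :=
      (hu₁ t (Ioo_subset_Icc_self ht)).hasDerivAt hmem
    have h₂ : HasDerivAt u₂ (u₂' t) t :=
      (hu₂ t (Ioo_subset_Icc_self ht)).hasDerivAt hmem
    have h₂c : HasDerivAt (fun s => (starRingEnd ℂ) (u₂ s))
        ((starRingEnd ℂ) (u₂' t)) t := by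
      have := (Complex.conjCLE.hasFDerivAt (x := u₂ t)).comp_hasDerivAt t h₂
      exact this
    have hmul := h₁.mul h₂c
    exact (Complex.reCLM.hasFDerivAt
        (x := u₁ t * (starRingEnd ℂ) (u₂ t))).comp_hasDerivAt t hmul
  -- FTC
  have hFTC : ∫ t in (-1 : ℝ)..1, g' t = g 1 - g (-1) := by
    apply intervalIntegral.integral_eq_sub_of_hasDeriv_right_of_le h1 hcg
      (fun t ht => (hgderiv t ht).hasDerivWithinAt)
    exact hcg'.intervalIntegrable_of_Icc h1
  -- pointwise identity
  have hpt : ∀ t : ℝ,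
      ‖-u₂' t + (m : ℂ) * u₁ t‖ ^ 2 + ‖u₁' t - (m : ℂ) * u₂ t‖ ^ 2
        = (‖u₁' t‖ ^ 2 + ‖u₂' t‖ ^ 2) + m ^ 2 * (‖u₁ t‖ ^ 2 + ‖u₂ t‖ ^ 2)
          - 2 * m * g' t := by
    intro t
    simp only [hg', Complex.sq_norm, Complex.normSq_apply,
      Complex.add_re, Complex.add_im, Complex.sub_re, Complex.sub_im,
      Complex.neg_re, Complex.neg_im, Complex.mul_re, Complex.mul_im,
      Complex.conj_re, Complex.conj_im, Complex.ofReal_re, Complex.ofReal_im]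
    ring
  -- integrability
  have hiA : IntervalIntegrable (fun t => ‖u₁' t‖ ^ 2 + ‖u₂' t‖ ^ 2)
      volume (-1 : ℝ) 1 :=
    (((hc₁.norm.pow 2).add (hc₂.norm.pow 2))).intervalIntegrable_of_Icc h1
  have hiB : IntervalIntegrable (fun t => ‖u₁ t‖ ^ 2 + ‖u₂ t‖ ^ 2)
      volume (-1 : ℝ) 1 :=
    (((hcu₁.norm.pow 2).add (hcu₂.norm.pow 2))).intervalIntegrable_of_Icc h1
  have hiG : IntervalIntegrable g' volume (-1 : ℝ) 1 :=
    hcg'.intervalIntegrable_of_Icc h1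
  have key : (∫ t in (-1 : ℝ)..1,
      (‖-u₂' t + (m : ℂ) * u₁ t‖ ^ 2 + ‖u₁' t - (m : ℂ) * u₂ t‖ ^ 2))
      = (∫ t in (-1 : ℝ)..1, (‖u₁' t‖ ^ 2 + ‖u₂' t‖ ^ 2))
        + m ^ 2 * (∫ t in (-1 : ℝ)..1, (‖u₁ t‖ ^ 2 + ‖u₂ t‖ ^ 2))
        - 2 * m * (g 1 - g (-1)) := by
    rw [← hFTC, ← intervalIntegral.integral_const_mul,
      ← intervalIntegral.integral_const_mul, ← intervalIntegral.integral_add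
        hiA (hiB.const_mul _), ← intervalIntegral.integral_sub
        (hiA.add (hiB.const_mul _)) (hiG.const_mul _)]
    exact intervalIntegral.integral_congr (fun t _ => hpt t)
  rw [key]
  have hg1 : g 1 = -‖u₁ 1‖ ^ 2 := by
    simp [hg, hbc1, Complex.sq_norm, Complex.normSq_apply,
      Complex.mul_re, Complex.conj_re, Complex.conj_im]
    ring
  have hgm1 : g (-1) = ‖u₁ (-1)‖ ^ 2 := by
    simp [hg, hbc2, Complex.sq_norm, Complex.normSq_apply,
      Complex.mul_re, Complex.conj_re, Complex.conj_im]
  rw [hg1, hgm1, hbc1, hbc2, norm_neg]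
  ring
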